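/- Let f be a ρ-symmetric bounded affine permutation of type (n,2n) and set m = #{i ∈ {1,…,2n} : f(i) = i+n}. Then the number of ρ-central alignments (i,j) of f with 1 ≤ i ≤ 2n equals (2n − m)/2. Equivalently, #{i ∈ {1,…,2n} : f(i) > i+n} = #{i ∈ {1,…,2n} : f(i) < i+n} = (2n − m)/2. -/

import Mathlib

/-- For a ρ-symmetric bounded affine permutation `f` of type `(n,2n)` with
`m = #{i ∈ [1,2n] : f i = i + n}`, the number of ρ-central alignments `(i,j)`
with `1 ≤ i ≤ 2n` equals `(2n − m)/2`; equivalently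
`#{i ∈ [1,2n] : f i > i + n} = #{i ∈ [1,2n] : f i < i + n} = (2n − m)/2`. -/
theorem stmt6 (n : ℕ) (f : ℤ → ℤ)
    (hbij : Function.Bijective f)
    (hper : ∀ i : ℤ, f (i + 2 * (n : ℤ)) = f i + 2 * (n : ℤ))
    (hbound : ∀ i : ℤ, i ≤ f i ∧ f i ≤ i + 2 * (n : ℤ))
    (hsum : ∑ i ∈ Finset.Icc (1 : ℤ) (2 * (n : ℤ)), (f i - i) = 2 * (n : ℤ) ^ 2)
    (hsym : ∀ i : ℤ, f (f i - (n : ℤ)) = i + (n : ℤ))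
    (m : ℕ)
    (hm : m = ((Finset.Icc (1 : ℤ) (2 * (n : ℤ))).filter
      (fun i => f i = i + (n : ℤ))).card) :
    {p : ℤ × ℤ | 1 ≤ p.1 ∧ p.1 ≤ 2 * (n : ℤ) ∧ p.1 < p.2 ∧ p.2 ≤ f p.2 ∧
        f p.2 < f p.1 ∧ f p.1 = p.2 + (n : ℤ)}.ncard = (2 * n - m) / 2 ∧
    ((Finset.Icc (1 : ℤ) (2 * (n : ℤ))).filter
      (fun i => i + (n : ℤ) < f i)).card = (2 * n - m) / 2 ∧
    ((Finset.Icc (1 : ℤ) (2 * (n : ℤ))).filter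
      (fun i => f i < i + (n : ℤ))).card = (2 * n - m) / 2 := by
  have hinj := hbij.injective
  have hper' : ∀ i : ℤ, f (i - 2 * (n : ℤ)) = f i - 2 * (n : ℤ) := by
    intro i
    have := hper (i - 2 * (n : ℤ))
    rw [sub_add_cancel] at this
    omega
  set A := (Finset.Icc (1 : ℤ) (2 * (n : ℤ))).filter (fun i => i + (n : ℤ) < f i) with hA
  set B := (Finset.Icc (1 : ℤ) (2 * (n : ℤ))).filter (fun i => f i < i + (n : ℤ)) with hB
  -- A and B have the same cardinality
  have hAB : A.card = B.card := by
    apply Finset.card_bij'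
      (i := fun i _ => if f i - n ≤ 2 * (n : ℤ) then f i - n else f i - n - 2 * n)
      (j := fun j _ => if 1 ≤ f j - n then f j - n else f j + n)
    · intro a ha
      rw [hA, Finset.mem_filter, Finset.mem_Icc] at ha
      rw [hB, Finset.mem_filter, Finset.mem_Icc]
      have h1 := hsym a
      have h2 := hper' (f a - n)
      have h3 := (hbound a).2
      split
      · constructor
        · constructor <;> omega
        · rw [h1]; omega
      · constructor
        · constructor <;> omega
        · rw [h2, h1]; omega
    · intro a ha
      rw [hB, Finset.mem_filter, Finset.mem_Icc] at ha
      rw [hA, Finset.mem_filter, Finset.mem_Icc]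
      have h1 := hsym a
      have h2 := hper (f a - n)
      have h3 := (hbound a).1
      split
      · constructor
        · constructor <;> omega
        · rw [h1]; omega
      · have : f a + n = f a - n + 2 * n := by ring
        rw [this, h2, h1]
        constructor
        · constructor <;> omega
        · omega
    · intro a ha
      rw [hA, Finset.mem_filter, Finset.mem_Icc] at ha
      have h1 := hsym a
      have h3 := (hbound a).2
      split
      · rw [h1]
        split
        · omega
        · omega
      · rw [hper' (f a - n), h1]
        split
        · omega
        · omega
    · intro a ha
      rw [hB, Finset.mem_filter, Finset.mem_Icc] at ha
      have h1 := hsym a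
      have h3 := (hbound a).1
      split
      · rw [h1]
        split
        · omega
        · omega
      · have : f a + n = f a - n + 2 * n := by ring
        rw [this, hper (f a - n), h1]
        split
        · omega
        · omega
  -- partition count
  have hIcc : (Finset.Icc (1 : ℤ) (2 * (n : ℤ))).card = 2 * n := by
    rw [Int.card_Icc]; omega
  have hpart := Finset.card_filter_add_card_filter_not
    (s := Finset.Icc (1 : ℤ) (2 * (n : ℤ))) (p := fun i => i + (n : ℤ) < f i)
  have hneg : (Finset.Icc (1 : ℤ) (2 * (n : ℤ))).filter (fun i => ¬ (i + (n : ℤ) < f i))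
      = ((Finset.Icc (1 : ℤ) (2 * (n : ℤ))).filter (fun i => f i = i + (n : ℤ))) ∪ B := by
    rw [hB, ← Finset.filter_or]
    apply Finset.filter_congr
    intro x _
    constructor
    · intro h; omega
    · intro h; omega
  have hdisj : Disjoint ((Finset.Icc (1 : ℤ) (2 * (n : ℤ))).filter
      (fun i => f i = i + (n : ℤ))) B := by
    rw [hB, Finset.disjoint_left]
    intro x hx hx'
    rw [Finset.mem_filter] at hx hx'
    omega
  have hcount : A.card + (m + B.card) = 2 * n := by
    rw [hm, ← Finset.card_union_of_disjoint hdisj, ← hneg, ← hIcc]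
    exact hpart
  -- the set of alignments
  have hset : {p : ℤ × ℤ | 1 ≤ p.1 ∧ p.1 ≤ 2 * (n : ℤ) ∧ p.1 < p.2 ∧ p.2 ≤ f p.2 ∧
        f p.2 < f p.1 ∧ f p.1 = p.2 + (n : ℤ)}
      = ↑(A.image (fun i => (i, f i - (n : ℤ)))) := by
    ext ⟨i, j⟩
    simp only [Set.mem_setOf_eq, Finset.coe_image, Set.mem_image, Finset.mem_coe, hA,
      Finset.mem_filter, Finset.mem_Icc, Prod.mk.injEq]
    constructor
    · rintro ⟨h1, h2, h3, h4, h5, h6⟩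
      exact ⟨i, ⟨⟨h1, h2⟩, by omega⟩, rfl, by omega⟩
    · rintro ⟨x, ⟨⟨hx1, hx2⟩, hx3⟩, rfl, rfl⟩
      have h1 := hsym x
      have h3 := (hbound x).2
      rw [h1]
      refine ⟨hx1, hx2, by omega, by omega, by omega, by omega⟩
  have hncard : {p : ℤ × ℤ | 1 ≤ p.1 ∧ p.1 ≤ 2 * (n : ℤ) ∧ p.1 < p.2 ∧ p.2 ≤ f p.2 ∧
        f p.2 < f p.1 ∧ f p.1 = p.2 + (n : ℤ)}.ncard = A.card := by
    rw [hset, Set.ncard_coe_finset]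
    exact Finset.card_image_of_injective _ (fun a b h => congrArg Prod.fst h)
  refine ⟨?_, ?_, ?_⟩
  · rw [hncard]; omega
  · show A.card = (2 * n - m) / 2
    omega
  · show B.card = (2 * n - m) / 2
    omega
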